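/- In the key-construction setup, suppose α ∈ F^{U×K} is a (T+1)-private MDS matrix. Then for every subset C ⊆ {1,…,K} with |C| ≤ T+1, the random tuple ([Q_i]_k)_{i∈{1,…,K}, k∈C} is uniformly distributed on F^{{1,…,K}×C} (i.e., the K·|C| shares are jointly uniform). -/

import Mathlib

open MeasureTheory Finset
open scoped ENNReal

/-- Two (discrete) random tuples `f` and `g` are statistically independent:
the joint law of `(f, g)` is the product of the marginal laws, expressed pointwise. -/
def IndepRV {Ω A B : Type*} [MeasurableSpace Ω] (P : Measure Ω)
    (f : Ω → A) (g : Ω → B) : Prop :=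
  ∀ (a : A) (b : B), P (f ⁻¹' {a} ∩ g ⁻¹' {b}) = P (f ⁻¹' {a}) * P (g ⁻¹' {b})

/-- A random variable valued in a finite type is uniformly distributed. -/
def UniformRV {Ω A : Type*} [Fintype A] [MeasurableSpace Ω] (P : Measure Ω)
    (f : Ω → A) : Prop :=
  ∀ a : A, P (f ⁻¹' {a}) = (Fintype.card A : ℝ≥0∞)⁻¹

/-- `α ∈ F^{U×K}` is an MDS matrix: every `U×U` submatrix formed by `U` distinct
columns is invertible. -/
def IsMDS {F : Type*} [Field F] {U K : ℕ} (α : Matrix (Fin U) (Fin K) F) : Prop :=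
  ∀ c : Fin U → Fin K, Function.Injective c →
    (Matrix.of fun i j : Fin U => α i (c j)).det ≠ 0

/-- `α ∈ F^{U×K}` is a `(T+1)`-private MDS matrix: it is MDS, and in addition every
`(T+1)×(T+1)` submatrix formed by `T+1` distinct columns of its last `T+1` rows is
invertible. -/
def IsPrivateMDS {F : Type*} [Field F] {U K : ℕ} (T : ℕ) (hTU : T + 1 ≤ U)
    (α : Matrix (Fin U) (Fin K) F) : Prop :=
  IsMDS α ∧
    ∀ c : Fin (T + 1) → Fin K, Function.Injective c →
      (Matrix.of fun i j : Fin (T + 1) =>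
        α ⟨U - (T + 1) + i.1, by have := i.isLt; omega⟩ (c j)).det ≠ 0

/-- The scalar share `[Q_i]_k`: the inner product of the concatenated row vector
`(N_i, S_i) ∈ F^U` with the `k`-th column of `α`. -/
def share {F : Type*} [Field F] {U K T : ℕ} (h : U - T - 1 + (T + 1) = U)
    (α : Matrix (Fin U) (Fin K) F)
    (n : Fin (U - T - 1) → F) (s : Fin (T + 1) → F) (k : Fin K) : F :=
  ∑ j : Fin U, Fin.append n s (Fin.cast h.symm j) * α j k

/- ### Auxiliary lemmas -/

lemma append_eta_aux {m n : ℕ} {γ : Sort*} (w : Fin (m + n) → γ) (j : Fin (m + n)) :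
    Fin.append (fun i => w (Fin.castAdd n i)) (fun i => w (Fin.natAdd m i)) j = w j := by
  refine Fin.addCases (fun i => ?_) (fun i => ?_) j
  · rw [Fin.append_left]
  · rw [Fin.append_right]

lemma fiber_card_eq_aux {G H : Type*} [AddCommGroup G] [AddCommGroup H] [Fintype G]
    [DecidableEq H] (L : G → H) (hL : ∀ x y z : G, L (x - y + z) = L x - L y + L z)
    {b1 b2 : H} (w1 w2 : G) (hw1 : L w1 = b1) (hw2 : L w2 = b2) :
    (univ.filter fun x => L x = b1).card = (univ.filter fun x => L x = b2).card := by
  refine Finset.card_nbij' (fun x => x - w1 + w2) (fun x => x - w2 + w1)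
    ?_ ?_ ?_ ?_
  · intro x hx
    simp only [mem_coe, mem_filter, mem_univ, true_and] at hx ⊢
    rw [hL, hx, hw1, hw2]; abel
  · intro x hx
    simp only [mem_coe, mem_filter, mem_univ, true_and] at hx ⊢
    rw [hL, hx, hw1, hw2]; abel
  · intro x _
    show x - w1 + w2 - w2 + w1 = x
    rw [add_sub_cancel_right, sub_add_cancel]
  · intro x _
    show x - w2 + w1 - w1 + w2 = x
    rw [add_sub_cancel_right, sub_add_cancel]

lemma fiber_mul_card_aux {X Y : Type*} [Fintype X] [Fintype Y] [DecidableEq Y] (f : X → Y)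
    (hf : ∀ y1 y2 : Y, (univ.filter fun x => f x = y1).card =
      (univ.filter fun x => f x = y2).card) (y : Y) :
    (univ.filter fun x => f x = y).card * Fintype.card Y = Fintype.card X := by
  have h1 : (univ : Finset X).card = ∑ y' : Y, (univ.filter fun x => f x = y').card :=
    Finset.card_eq_sum_card_fiberwise fun x _ => mem_univ _
  have h2 : ∑ y' : Y, (univ.filter fun x => f x = y').card
      = ∑ _y' : Y, (univ.filter fun x => f x = y).card :=
    Finset.sum_congr rfl fun y' _ => hf y' y
  have h3 : Fintype.card X = Fintype.card Y * (univ.filter fun x => f x = y).card := by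
    calc Fintype.card X = (univ : Finset X).card := Finset.card_univ.symm
      _ = ∑ y' : Y, (univ.filter fun x => f x = y').card := h1
      _ = ∑ _y' : Y, (univ.filter fun x => f x = y).card := h2
      _ = Fintype.card Y * (univ.filter fun x => f x = y).card := by
          rw [Finset.sum_const, Finset.card_univ, smul_eq_mul]
  rw [h3, Nat.mul_comm]

lemma L_surj_aux {F : Type*} [Field F] {U K : ℕ} (α : Matrix (Fin U) (Fin K) F)
    (hmds : IsMDS α) (hUK : U ≤ K) (C : Finset (Fin K)) (hCU : C.card ≤ U) :
    Function.Surjective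
      (fun (v : Fin U → F) => fun k : {k : Fin K // k ∈ C} => ∑ j, v j * α j k.1) := by
  classical
  obtain ⟨D, hCD, hDcard⟩ := Finset.exists_superset_card_eq hCU (by simpa using hUK)
  have e : {x // x ∈ D} ≃ Fin U := Finset.equivFinOfCardEq hDcard
  set c' : Fin U → Fin K := fun j => (e.symm j : Fin K) with hc'
  have hc'inj : Function.Injective c' :=
    fun i j hij => e.symm.injective (Subtype.ext hij)
  set M : Matrix (Fin U) (Fin U) F := Matrix.of fun i j => α i (c' j) with hM
  have hdet : M.det ≠ 0 := hmds c' hc'inj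
  intro b
  set b' : Fin U → F := fun j => if h : c' j ∈ C then b ⟨c' j, h⟩ else 0 with hb'
  refine ⟨Matrix.vecMul b' M⁻¹, ?_⟩
  funext k
  have hkD : k.1 ∈ D := hCD k.2
  have hMM : Matrix.vecMul (Matrix.vecMul b' M⁻¹) M = b' := by
    rw [Matrix.vecMul_vecMul, Matrix.nonsing_inv_mul M (isUnit_iff_ne_zero.mpr hdet),
      Matrix.vecMul_one]
  have hj0 : c' (e ⟨k.1, hkD⟩) = k.1 := by simp [hc']
  have step1 : ∑ j, (Matrix.vecMul b' M⁻¹) j * α j k.1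
      = Matrix.vecMul (Matrix.vecMul b' M⁻¹) M (e ⟨k.1, hkD⟩) := by
    rw [Matrix.vecMul]
    simp only [dotProduct, hM, Matrix.of_apply, hj0]
  have step2 : b' (e ⟨k.1, hkD⟩) = b k := by
    have h1 : c' (e ⟨k.1, hkD⟩) ∈ C := by rw [hj0]; exact k.2
    simp only [hb', dif_pos h1]
    congr 1
    exact Subtype.ext hj0
  simp only [step1, hMM, step2]

/-- **Joint uniformity of the shares.**
In the key-construction setup with a `(T+1)`-private MDS matrix `α`, for every subset
`C ⊆ {1, …, K}` with `|C| ≤ T + 1`, the tuple of shares `([Q_i]_k)_{i ∈ [K], k ∈ C}` is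
uniformly distributed on `F^{[K] × C}`. -/
theorem key_construction_shares_uniform
    (F : Type) [Field F] [Fintype F] (q K U T : ℕ)
    (hq : Fintype.card F = q) (hTU : T + 1 ≤ U) (hUK : U ≤ K)
    (Ω : Type) [MeasurableSpace Ω] (P : Measure Ω) [IsProbabilityMeasure P]
    (N : Fin K → Ω → (Fin (U - T - 1) → F))
    (S : Fin K → Ω → (Fin (T + 1) → F))
    (hindep : ∀ (a : Fin K → (Fin (U - T - 1) → F)) (b : Fin K → (Fin (T + 1) → F)),
      P ((⋂ i, N i ⁻¹' {a i}) ∩ ⋂ i, S i ⁻¹' {b i}) =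
        (∏ i, P (N i ⁻¹' {a i})) * ∏ i, P (S i ⁻¹' {b i}))
    (hunifN : ∀ i, UniformRV P (N i))
    (hunifS : ∀ i, UniformRV P (S i))
    (α : Matrix (Fin U) (Fin K) F)
    (hα : IsPrivateMDS T hTU α)
    (C : Finset (Fin K)) (hC : C.card ≤ T + 1) :
    UniformRV P
      (fun ω => fun p : Fin K × {k : Fin K // k ∈ C} =>
        share (by omega) α (N p.1 ω) (S p.1 ω) p.2.1) := by
  classical
  have hq0 : (q : ℝ≥0∞) ≠ 0 := by
    have : 0 < q := hq ▸ Fintype.card_pos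
    exact_mod_cast this.ne'
  have hqtop : (q : ℝ≥0∞) ≠ ⊤ := ENNReal.natCast_ne_top q
  intro a
  have hc : U - T - 1 + (T + 1) = U := by omega
  set L : (Fin U → F) → ({k : Fin K // k ∈ C} → F) := fun v k => ∑ j, v j * α j k.1
    with hLdef
  have hLsurj : Function.Surjective L := L_surj_aux α hα.1 hUK C (le_trans hC hTU)
  have hLadd : ∀ x y z, L (x - y + z) = L x - L y + L z := by
    intro x y z; funext k
    simp only [hLdef, Pi.add_apply, Pi.sub_apply, sub_mul, add_mul,
      Finset.sum_add_distrib, Finset.sum_sub_distrib]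
  set m : ({k : Fin K // k ∈ C} → F) → ℕ :=
    fun b => (univ.filter fun v => L v = b).card with hmdef
  have hm_eq : ∀ b1 b2, m b1 = m b2 := fun b1 b2 =>
    fiber_card_eq_aux L hLadd (hLsurj b1).choose (hLsurj b2).choose
      (hLsurj b1).choose_spec (hLsurj b2).choose_spec
  have hcardC' : Fintype.card {k : Fin K // k ∈ C} = C.card := Fintype.card_coe C
  have hm_mul : ∀ b, (m b) * q ^ C.card = q ^ U := by
    intro b
    have h := fiber_mul_card_aux L hm_eq b
    rwa [Fintype.card_fun, Fintype.card_fun, hq, hcardC', Fintype.card_fin] at h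
  have hm_ne : ∀ b, m b ≠ 0 := by
    intro b
    obtain ⟨v, hv⟩ := hLsurj b
    exact Finset.card_ne_zero_of_mem (mem_filter.mpr ⟨mem_univ v, hv⟩)
  -- the pairing between `(n, s)` pairs and vectors in `F^U`
  set π : ((Fin (U - T - 1) → F) × (Fin (T + 1) → F)) → (Fin U → F) :=
    fun x j => Fin.append x.1 x.2 (Fin.cast hc.symm j) with hπ
  set ψ : (Fin U → F) → ((Fin (U - T - 1) → F) × (Fin (T + 1) → F)) :=
    fun v => (fun i => v (Fin.cast hc (Fin.castAdd (T + 1) i)),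
      fun i => v (Fin.cast hc (Fin.natAdd (U - T - 1) i))) with hψ
  have hπψ : ∀ v, π (ψ v) = v := by
    intro v; funext j
    have h2 : Fin.cast hc (Fin.cast hc.symm j) = j := by ext; simp
    calc π (ψ v) j = (fun j' => v (Fin.cast hc j')) (Fin.cast hc.symm j) :=
          append_eta_aux (fun j' => v (Fin.cast hc j')) (Fin.cast hc.symm j)
      _ = v j := by simp only [h2]
  have hψπ : ∀ x, ψ (π x) = x := by
    intro x
    refine Prod.ext ?_ ?_ <;> funext i
    · show Fin.append x.1 x.2 (Fin.cast hc.symm (Fin.cast hc (Fin.castAdd (T + 1) i)))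
        = x.1 i
      have h3 : Fin.cast hc.symm (Fin.cast hc (Fin.castAdd (T + 1) i))
          = Fin.castAdd (T + 1) i := by ext; simp
      rw [h3, Fin.append_left]
    · show Fin.append x.1 x.2 (Fin.cast hc.symm (Fin.cast hc (Fin.natAdd (U - T - 1) i)))
        = x.2 i
      have h3 : Fin.cast hc.symm (Fin.cast hc (Fin.natAdd (U - T - 1) i))
          = Fin.natAdd (U - T - 1) i := by ext; simp
      rw [h3, Fin.append_right]
  have hshareL : ∀ (x : (Fin (U - T - 1) → F) × (Fin (T + 1) → F))
      (k : {k : Fin K // k ∈ C}), share hc α x.1 x.2 k.1 = L (π x) k := fun x k => rfl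
  -- fiber counts for pairs
  have hpair : ∀ b : {k : Fin K // k ∈ C} → F,
      (univ.filter fun x : (Fin (U - T - 1) → F) × (Fin (T + 1) → F) =>
        ∀ k : {k : Fin K // k ∈ C}, share hc α x.1 x.2 k.1 = b k).card = m b := by
    intro b
    refine Finset.card_nbij' π ψ ?_ ?_ ?_ ?_
    · intro x hx
      simp only [mem_coe, mem_filter, mem_univ, true_and] at hx ⊢
      funext k
      rw [← hshareL x k]; exact hx k
    · intro v hv
      simp only [mem_coe, mem_filter, mem_univ, true_and] at hv ⊢
      intro k
      rw [hshareL (ψ v) k, hπψ v, hv]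
    · intro x _; exact hψπ x
    · intro v _; exact hπψ v
  -- the elementary events
  set E : ((Fin K → (Fin (U - T - 1) → F)) × (Fin K → (Fin (T + 1) → F))) → Set Ω :=
    fun x => (⋂ i, N i ⁻¹' {x.1 i}) ∩ ⋂ i, S i ⁻¹' {x.2 i} with hE
  have hcardA : (Fintype.card (Fin (U - T - 1) → F) : ℝ≥0∞) = (q : ℝ≥0∞) ^ (U - T - 1) := by
    rw [Fintype.card_fun, hq, Fintype.card_fin]; push_cast; ring
  have hcardB : (Fintype.card (Fin (T + 1) → F) : ℝ≥0∞) = (q : ℝ≥0∞) ^ (T + 1) := by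
    rw [Fintype.card_fun, hq, Fintype.card_fin]; push_cast; ring
  have hPE : ∀ x, P (E x) = (((q : ℝ≥0∞) ^ U)⁻¹) ^ K := by
    intro x
    rw [hE]
    rw [hindep x.1 x.2]
    have h1 : ∀ i, P (N i ⁻¹' {x.1 i}) = ((q : ℝ≥0∞) ^ (U - T - 1))⁻¹ := by
      intro i; rw [hunifN i (x.1 i), hcardA]
    have h2 : ∀ i, P (S i ⁻¹' {x.2 i}) = ((q : ℝ≥0∞) ^ (T + 1))⁻¹ := by
      intro i; rw [hunifS i (x.2 i), hcardB]
    rw [Finset.prod_congr rfl fun i _ => h1 i, Finset.prod_congr rfl fun i _ => h2 i,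
      Finset.prod_const, Finset.prod_const, card_univ, Fintype.card_fin, ← mul_pow,
      ← ENNReal.mul_inv (Or.inl (pow_ne_zero _ hq0)) (Or.inl (ENNReal.pow_ne_top hqtop)),
      ← pow_add, hc]
  set Sol : Finset ((Fin K → (Fin (U - T - 1) → F)) × (Fin K → (Fin (T + 1) → F))) :=
    univ.filter fun x => ∀ p : Fin K × {k : Fin K // k ∈ C},
      share hc α (x.1 p.1) (x.2 p.1) p.2.1 = a p with hSol
  show P ((fun ω => fun p : Fin K × {k : Fin K // k ∈ C} =>
      share hc α (N p.1 ω) (S p.1 ω) p.2.1) ⁻¹' {a}) = _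
  set f : Ω → (Fin K × {k : Fin K // k ∈ C} → F) :=
    fun ω => fun p => share hc α (N p.1 ω) (S p.1 ω) p.2.1 with hf
  have hmemf : ∀ ω : Ω, f ω = a ↔ ((fun i => N i ω, fun i => S i ω) ∈ Sol) := by
    intro ω
    rw [hSol, mem_filter]
    simp only [mem_univ, true_and, funext_iff, hf]
  have hmemE : ∀ ω : Ω, ω ∈ E (fun i => N i ω, fun i => S i ω) := by
    intro ω
    exact ⟨Set.mem_iInter.2 fun i => rfl, Set.mem_iInter.2 fun i => rfl⟩
  have hsub1 : f ⁻¹' {a} ⊆ ⋃ x ∈ Sol, E x := by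
    intro ω hω
    exact Set.mem_biUnion ((hmemf ω).1 hω) (hmemE ω)
  have hcover : (Set.univ : Set Ω) ⊆ f ⁻¹' {a} ∪ ⋃ x ∈ univ \ Sol, E x := by
    intro ω _
    by_cases hx : (fun i => N i ω, fun i => S i ω) ∈ Sol
    · exact Or.inl ((hmemf ω).2 hx)
    · exact Or.inr (Set.mem_biUnion (mem_sdiff.2 ⟨mem_univ _, hx⟩) (hmemE ω))
  have hsub2 : ∀ x ∈ Sol, E x ⊆ f ⁻¹' {a} := by
    intro x hx ω hω
    obtain ⟨h1, h2⟩ := hω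
    have hN : ∀ i, N i ω = x.1 i := fun i => Set.mem_iInter.1 h1 i
    have hS : ∀ i, S i ω = x.2 i := fun i => Set.mem_iInter.1 h2 i
    have hxc := (mem_filter.1 hx).2
    show f ω = a
    funext p
    rw [hf]
    simp only
    rw [hN p.1, hS p.1]
    exact hxc p
  have hupper : P (f ⁻¹' {a}) ≤ ∑ x ∈ Sol, P (E x) :=
    le_trans (measure_mono hsub1) (measure_biUnion_finset_le Sol E)
  have hlowaux : (1 : ℝ≥0∞) ≤ P (f ⁻¹' {a}) + ∑ x ∈ univ \ Sol, P (E x) := by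
    calc (1 : ℝ≥0∞) = P Set.univ := measure_univ.symm
      _ ≤ P (f ⁻¹' {a} ∪ ⋃ x ∈ univ \ Sol, E x) := measure_mono hcover
      _ ≤ P (f ⁻¹' {a}) + P (⋃ x ∈ univ \ Sol, E x) := measure_union_le _ _
      _ ≤ _ := add_le_add le_rfl (measure_biUnion_finset_le _ E)
  have hcardXY : Fintype.card ((Fin K → (Fin (U - T - 1) → F)) × (Fin K → (Fin (T + 1) → F)))
      = (q ^ U) ^ K := by
    simp only [Fintype.card_prod, Fintype.card_fun, Fintype.card_fin, hq]
    rw [← mul_pow, ← pow_add, hc]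
  have htotal : (∑ x ∈ Sol, P (E x)) + (∑ x ∈ univ \ Sol, P (E x)) = 1 := by
    rw [add_comm, Finset.sum_sdiff (Finset.subset_univ Sol),
      Finset.sum_congr rfl fun x _ => hPE x, Finset.sum_const, card_univ, nsmul_eq_mul,
      hcardXY]
    push_cast
    rw [← mul_pow, ENNReal.mul_inv_cancel (pow_ne_zero _ hq0) (ENNReal.pow_ne_top hqtop),
      one_pow]
  have hcnetop : (∑ x ∈ univ \ Sol, P (E x)) ≠ ⊤ := by
    refine ne_top_of_le_ne_top ENNReal.one_ne_top ?_
    calc (∑ x ∈ univ \ Sol, P (E x)) ≤ (∑ x ∈ Sol, P (E x)) + _ := le_add_self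
      _ = 1 := htotal
  have hlower : ∑ x ∈ Sol, P (E x) ≤ P (f ⁻¹' {a}) := by
    have := htotal ▸ hlowaux
    exact (ENNReal.add_le_add_iff_right hcnetop).1 this
  have hP_eq : P (f ⁻¹' {a}) = ∑ x ∈ Sol, P (E x) := le_antisymm hupper hlower
  -- count `Sol`
  set t : Fin K → Finset ((Fin (U - T - 1) → F) × (Fin (T + 1) → F)) :=
    fun i => univ.filter fun x => ∀ k : {k : Fin K // k ∈ C},
      share hc α x.1 x.2 k.1 = a (i, k) with ht
  have hSolcard : Sol.card = ∏ i, (t i).card := by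
    rw [← Fintype.card_piFinset]
    refine Finset.card_nbij' (fun x => fun i => (x.1 i, x.2 i))
      (fun g => (fun i => (g i).1, fun i => (g i).2)) ?_ ?_ ?_ ?_
    · intro x hx
      rw [mem_coe, Fintype.mem_piFinset]
      intro i
      simp only [ht, mem_filter, mem_univ, true_and]
      intro k
      exact (mem_filter.1 hx).2 (i, k)
    · intro g hg
      simp only [hSol, mem_coe, mem_filter, mem_univ, true_and]
      intro p
      have := Fintype.mem_piFinset.1 hg p.1
      simp only [ht, mem_filter, mem_univ, true_and] at this
      exact this p.2
    · intro x _; rfl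
    · intro g _; rfl
  have hti : ∀ i, (t i).card = m (fun k => a (i, k)) := fun i => hpair _
  have hfactor : ∀ b, ((m b : ℝ≥0∞)) * ((q : ℝ≥0∞) ^ U)⁻¹ = ((q : ℝ≥0∞) ^ C.card)⁻¹ := by
    intro b
    have h1 : ((m b : ℝ≥0∞)) * (q : ℝ≥0∞) ^ C.card = (q : ℝ≥0∞) ^ U := by
      exact_mod_cast congrArg (Nat.cast : ℕ → ℝ≥0∞) (hm_mul b)
    rw [← h1,
      ENNReal.mul_inv (Or.inr (ENNReal.pow_ne_top hqtop))
        (Or.inr (pow_ne_zero _ hq0)),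
      ← mul_assoc,
      ENNReal.mul_inv_cancel (by exact_mod_cast hm_ne b) (ENNReal.natCast_ne_top _),
      one_mul]
  rw [hP_eq, Finset.sum_congr rfl fun x _ => hPE x, Finset.sum_const, nsmul_eq_mul]
  rw [hSolcard]
  push_cast
  have hL1 : (∏ i : Fin K, ((t i).card : ℝ≥0∞)) * (((q : ℝ≥0∞) ^ U)⁻¹) ^ K
      = (((q : ℝ≥0∞) ^ C.card)⁻¹) ^ K := by
    rw [show (((q : ℝ≥0∞) ^ U)⁻¹) ^ K = ∏ _i : Fin K, ((q : ℝ≥0∞) ^ U)⁻¹ by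
        rw [Finset.prod_const, card_univ, Fintype.card_fin],
      ← Finset.prod_mul_distrib,
      show (((q : ℝ≥0∞) ^ C.card)⁻¹) ^ K = ∏ _i : Fin K, ((q : ℝ≥0∞) ^ C.card)⁻¹ by
        rw [Finset.prod_const, card_univ, Fintype.card_fin]]
    exact Finset.prod_congr rfl fun i _ => by rw [hti i]; exact hfactor _
  rw [hL1]
  have hcardT : (Fintype.card (Fin K × {k : Fin K // k ∈ C} → F) : ℝ≥0∞)
      = ((q : ℝ≥0∞) ^ C.card) ^ K := by
    rw [Fintype.card_fun, hq, Fintype.card_prod, Fintype.card_fin, hcardC']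
    push_cast
    rw [mul_comm K C.card, pow_mul]
  rw [hcardT]
  simp [← ENNReal.inv_pow]
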